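/- arXiv:2010.08812 — 3 statements merged into one kernel-verified Lean document; each statement's English description precedes it below -/
import Mathlib

section
/- A set A ⊆ 2^ℕ is countably perfectly meager in 2^ℕ if and only if for every perfect subset P of 2^ℕ there exists an F_σ-set F in 2^ℕ such that A ⊆ F and F ∩ (P + q) is meager in P + q for every q ∈ ℚ, where ℚ denotes the set of eventually zero binary sequences and + is coordinatewise addition mod 2. -/
open Set Topology

/-- An `Fσ` set: a countable union of closed sets. -/
def IsFsigma {X : Type*} [TopologicalSpace X] (F : Set X) : Prop :=
  ∃ s : ℕ → Set X, (∀ n, IsClosed (s n)) ∧ F = ⋃ n, s n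

/-- A perfect set in the classical sense: nonempty, closed, without isolated points. -/
def PerfectSet {X : Type*} [TopologicalSpace X] (P : Set X) : Prop :=
  Perfect P ∧ P.Nonempty

/-- A Cantor set: a subset homeomorphic to the Cantor space `2^ℕ`
(hence nonempty and compact). -/
def IsCantorSet {X : Type*} [TopologicalSpace X] (K : Set X) : Prop :=
  Nonempty ((ℕ → Bool) ≃ₜ K)

/-- `F` is meager relative to the subspace `P`. -/
def MeagerIn {X : Type*} [TopologicalSpace X] (F P : Set X) : Prop :=
  IsMeagre ((↑) ⁻¹' F : Set P)

/-- `A` is countably perfectly meager in `X`. -/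
def CPM {X : Type*} [TopologicalSpace X] (A : Set X) : Prop :=
  ∀ P : ℕ → Set X, (∀ n, PerfectSet (P n)) →
    ∃ F : Set X, IsFsigma F ∧ A ⊆ F ∧ ∀ n, MeagerIn F (P n)

/-- Coordinatewise addition mod 2 on `2^ℕ`. -/
def cAdd (x y : ℕ → Bool) : ℕ → Bool := fun n => xor (x n) (y n)

/-- The translate `P + q` of a set `P ⊆ 2^ℕ`. -/
def cTranslate (P : Set (ℕ → Bool)) (t : ℕ → Bool) : Set (ℕ → Bool) :=
  (fun x => cAdd x t) '' P

/-- Eventually zero binary sequences. -/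
def EventuallyZero (q : ℕ → Bool) : Prop := ∀ᶠ n in Filter.atTop, q n = false

namespace S17

lemma cAdd_cancel (x q : ℕ → Bool) : cAdd (cAdd x q) q = x := by
  funext n; simp [cAdd, Bool.xor_assoc]

lemma xor_xor (a b : Bool) : xor a (xor a b) = b := by cases a <;> cases b <;> rfl

def tHomeo (q : ℕ → Bool) : (ℕ → Bool) ≃ₜ (ℕ → Bool) where
  toFun x := cAdd x q
  invFun x := cAdd x q
  left_inv x := cAdd_cancel x q
  right_inv x := cAdd_cancel x q
  continuous_toFun := by
    refine continuous_pi fun n => ?_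
    exact (continuous_of_discreteTopology :
      Continuous (fun b : Bool => xor b (q n))).comp (continuous_apply n)
  continuous_invFun := by
    refine continuous_pi fun n => ?_
    exact (continuous_of_discreteTopology :
      Continuous (fun b : Bool => xor b (q n))).comp (continuous_apply n)

lemma cTranslate_eq (P : Set (ℕ → Bool)) (q : ℕ → Bool) :
    cTranslate P q = tHomeo q '' P := rfl

lemma mem_cTranslate_iff {P : Set (ℕ → Bool)} {q y : ℕ → Bool} :
    y ∈ cTranslate P q ↔ cAdd y q ∈ P := by
  constructor
  · rintro ⟨z, hz, rfl⟩; rwa [cAdd_cancel]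
  · intro h; exact ⟨cAdd y q, h, cAdd_cancel y q⟩

lemma cTranslate_cTranslate (S : Set (ℕ → Bool)) (q : ℕ → Bool) :
    cTranslate (cTranslate S q) q = S := by
  ext y
  rw [mem_cTranslate_iff, mem_cTranslate_iff, cAdd_cancel]

lemma perfect_image {X Y : Type*} [TopologicalSpace X] [TopologicalSpace Y]
    (h : X ≃ₜ Y) {C : Set X} (hC : Perfect C) : Perfect (h '' C) := by
  refine ⟨h.isClosedMap _ hC.closed, ?_⟩
  rw [preperfect_iff_nhds]
  rintro y ⟨a, haC, rfl⟩ U hU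
  have hU' : h ⁻¹' U ∈ 𝓝 a := h.continuous.continuousAt.preimage_mem_nhds (by simpa using hU)
  obtain ⟨z, ⟨hzU, hzC⟩, hz⟩ := preperfect_iff_nhds.mp hC.acc a haC _ hU'
  exact ⟨h z, ⟨hzU, ⟨z, hzC, rfl⟩⟩, fun e => hz (h.injective e)⟩

lemma perfect_cTranslate {P : Set (ℕ → Bool)} (hP : Perfect P) (q : ℕ → Bool) :
    Perfect (cTranslate P q) := perfect_image (tHomeo q) hP

def Cyl (N : ℕ) (x : ℕ → Bool) : Set (ℕ → Bool) := {y | ∀ k < N, y k = x k}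

lemma mem_Cyl_self (N : ℕ) (x : ℕ → Bool) : x ∈ Cyl N x := fun _ _ => rfl

lemma isClopen_Cyl (N : ℕ) (x : ℕ → Bool) : IsClopen (Cyl N x) := by
  have : Cyl N x = ⋂ (k : Fin N), (fun y : ℕ → Bool => y k) ⁻¹' {x k} := by
    ext y; simp [Cyl, Fin.forall_iff]
  rw [this]
  constructor
  · exact isClosed_iInter fun k => (isClosed_discrete _).preimage (continuous_apply (k : ℕ))
  · exact isOpen_iInter_of_finite fun k => (isOpen_discrete _).preimage (continuous_apply (k : ℕ))

lemma Cyl_congr {N : ℕ} {x x' : ℕ → Bool} (h : ∀ k < N, x k = x' k) :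
    Cyl N x = Cyl N x' := by
  ext y
  constructor <;> intro hy k hk
  · rw [hy k hk, h k hk]
  · rw [hy k hk, ← h k hk]

lemma nhds_cyl {U : Set (ℕ → Bool)} {x : ℕ → Bool} (hU : U ∈ 𝓝 x) :
    ∃ N, Cyl N x ⊆ U := by
  rw [nhds_pi, Filter.mem_pi] at hU
  obtain ⟨I, hIfin, t, ht, hsub⟩ := hU
  obtain ⟨N, hN⟩ := hIfin.bddAbove
  refine ⟨N + 1, fun y hy => hsub fun i hi => ?_⟩
  have hyi : y i = x i := hy i (Nat.lt_succ_of_le (hN hi))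
  rw [hyi]
  have := ht i
  rwa [nhds_discrete, Filter.mem_pure] at this

lemma perfect_inter_cyl {P : Set (ℕ → Bool)} (hP : Perfect P) (N : ℕ) (x : ℕ → Bool)
    (hne : (P ∩ Cyl N x).Nonempty) : Perfect (P ∩ Cyl N x) := by
  obtain ⟨z, hzP, hzC⟩ := hne
  have h := hP.closure_nhds_inter z hzP hzC (isClopen_Cyl N x).isOpen
  have hcl : IsClosed (Cyl N x ∩ P) := (isClopen_Cyl N x).isClosed.inter hP.closed
  rw [hcl.closure_eq] at h
  rw [inter_comm]
  exact h.1

/-- list-indexed cylinders (for countability) -/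
def CylL (s : List Bool) : Set (ℕ → Bool) := Cyl s.length (fun k => s.getD k false)

lemma exists_CylL (N : ℕ) (x : ℕ → Bool) : ∃ s : List Bool, CylL s = Cyl N x := by
  refine ⟨List.ofFn (fun i : Fin N => x i), ?_⟩
  unfold CylL
  rw [List.length_ofFn]
  refine Cyl_congr fun k hk => ?_
  rw [List.getD_eq_getElem _ _ (by simpa using hk), List.getElem_ofFn]

/-- The key construction: a single perfect set whose rational translates have
portions inside every cylinder-portion of every `P n`. -/
lemma key_lemma (P : ℕ → Set (ℕ → Bool)) (hP : ∀ n, PerfectSet (P n)) :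
    ∃ Pstar : Set (ℕ → Bool), PerfectSet Pstar ∧
      ∀ n (N : ℕ) (x : ℕ → Bool), (P n ∩ Cyl N x).Nonempty →
        ∃ q : ℕ → Bool, EventuallyZero q ∧ ∃ G : Set (ℕ → Bool), IsOpen G ∧
          (cTranslate Pstar q ∩ G).Nonempty ∧ cTranslate Pstar q ∩ G ⊆ P n ∩ Cyl N x := by
  classical
  obtain ⟨e, he⟩ := exists_surjective_nat (ℕ × List Bool)
  set Q : ℕ → Set (ℕ → Bool) := fun m =>
    if (P (e m).1 ∩ CylL (e m).2).Nonempty then P (e m).1 ∩ CylL (e m).2 else P 0 with hQdef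
  have hQ : ∀ m, Perfect (Q m) ∧ (Q m).Nonempty := by
    intro m
    rw [hQdef]
    dsimp only
    by_cases h : (P (e m).1 ∩ CylL (e m).2).Nonempty
    · rw [if_pos h]
      exact ⟨perfect_inter_cyl (hP _).1 _ _ h, h⟩
    · rw [if_neg h]
      exact ⟨(hP 0).1, (hP 0).2⟩
  choose x hx using fun m => (hQ m).2
  set q : ℕ → ℕ → Bool := fun m k => if k < m + 1 then xor (x m k) (decide (k = m)) else false
    with hqdef
  have hqEZ : ∀ m, EventuallyZero (q m) := by
    intro m
    rw [EventuallyZero, Filter.eventually_atTop]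
    exact ⟨m + 1, fun k hk => if_neg (not_lt.mpr hk)⟩
  set pat : ℕ → ℕ → Bool := fun m k => decide (k = m) with hpatdef
  set D : ℕ → Set (ℕ → Bool) := fun m => Cyl (m + 1) (pat m) with hDdef
  set C : ℕ → Set (ℕ → Bool) := fun m => Cyl (m + 1) (x m) with hCdef
  set R : ℕ → Set (ℕ → Bool) := fun m => cTranslate (Q m ∩ C m) (q m) with hRdef
  -- fact (a): translating a point of C m lands in D m
  have ha : ∀ m z, z ∈ C m → cAdd z (q m) ∈ D m := by
    intro m z hz k hk
    have hzk : z k = x m k := hz k hk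
    show xor (z k) (q m k) = pat m k
    rw [hzk, hqdef]
    simp only [if_pos hk]
    exact xor_xor _ _
  have hRD : ∀ m, R m ⊆ D m := by
    rintro m y ⟨z, ⟨_, hzC⟩, rfl⟩
    exact ha m z hzC
  have hRperf : ∀ m, Perfect (R m) := by
    intro m
    exact perfect_cTranslate (perfect_inter_cyl (hQ m).1 _ _ ⟨x m, hx m, mem_Cyl_self _ _⟩) _
  have hxR : ∀ m, cAdd (x m) (q m) ∈ R m := by
    intro m
    exact ⟨x m, ⟨hx m, mem_Cyl_self _ _⟩, rfl⟩
  -- disjointness facts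
  have hpatm : ∀ m (w : ℕ → Bool), w ∈ D m → w m = true := by
    intro m w hw
    have := hw m (Nat.lt_succ_self m)
    simpa [hpatdef] using this
  have hpatk : ∀ m k, k < m → ∀ w : ℕ → Bool, w ∈ D m → w k = false := by
    intro m k hkm w hw
    have := hw k (hkm.trans (Nat.lt_succ_self m))
    rw [this]
    simp [hpatdef, Nat.ne_of_lt hkm]
  have hDdisj : ∀ {m m' : ℕ}, m < m' → ∀ w : ℕ → Bool, w ∈ D m → w ∈ D m' → False := by
    intro m m' h w hm hm'
    have h1 := hpatm m w hm
    have h2 := hpatk m' m h w hm'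
    rw [h1] at h2
    exact Bool.noConfusion h2
  set zero : ℕ → Bool := fun _ => false with hzerodef
  have hzD : ∀ m, zero ∉ D m := by
    intro m h
    have := hpatm m zero h
    simp [hzerodef] at this
  set Pstar : Set (ℕ → Bool) := insert zero (⋃ m, R m) with hPstardef
  have hRP : ∀ m, R m ⊆ Pstar := fun m =>
    subset_trans (subset_iUnion R m) (subset_insert _ _)
  have hPD : ∀ m, Pstar ∩ D m = R m := by
    intro m
    apply Subset.antisymm
    · rintro y ⟨hyP, hyD⟩
      rcases hyP with rfl | hyU
      · exact absurd hyD (hzD m)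
      · obtain ⟨m', hy⟩ := mem_iUnion.mp hyU
        rcases lt_trichotomy m' m with h | rfl | h
        · exact absurd hyD fun hD => hDdisj h y (hRD m' hy) hD
        · exact hy
        · exact absurd (hRD m' hy) fun hD => hDdisj h y hyD hD
    · exact fun y hy => ⟨hRP m hy, hRD m hy⟩
  have hPclosed : IsClosed Pstar := by
    rw [← isOpen_compl_iff, isOpen_iff_mem_nhds]
    intro z hz
    have hzzero : z ≠ zero := by rintro rfl; exact hz (mem_insert _ _)
    have hex : ∃ k, z k = true := by
      by_contra hc
      push_neg at hc
      exact hzzero (funext fun k => by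
        have := hc k
        simp only [hzerodef]
        exact Bool.eq_false_iff.mpr this)
    classical
    have hk : z (Nat.find hex) = true := Nat.find_spec hex
    have hmin : ∀ j, j < Nat.find hex → z j = false := fun j hj =>
      Bool.eq_false_iff.mpr (Nat.find_min hex hj)
    refine mem_nhds_iff.mpr ⟨Cyl (Nat.find hex + 1) z ∩ (R (Nat.find hex))ᶜ, ?_,
      (isClopen_Cyl _ _).isOpen.inter (hRperf (Nat.find hex)).closed.isOpen_compl,
      ⟨mem_Cyl_self _ _, fun hzR => hz (hRP (Nat.find hex) hzR)⟩⟩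
    rintro y ⟨hyC, hyR⟩ hyP
    rcases hyP with rfl | hyU
    · have h2 := hyC (Nat.find hex) (Nat.lt_succ_self _)
      rw [hk] at h2
      simp [hzerodef] at h2
    · obtain ⟨m, hy⟩ := mem_iUnion.mp hyU
      have hyD := hRD m hy
      rcases lt_trichotomy m (Nat.find hex) with h | heq | h
      · have h1 := hpatm m y hyD
        have h2 : y m = z m := hyC m (h.trans (Nat.lt_succ_self _))
        rw [h1, hmin m h] at h2
        exact Bool.noConfusion h2
      · exact hyR (heq ▸ hy)
      · have h1 := hpatk m (Nat.find hex) h y hyD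
        have h2 : y (Nat.find hex) = z (Nat.find hex) := hyC _ (Nat.lt_succ_self _)
        rw [h1, hk] at h2
        exact Bool.noConfusion h2
  have hPacc : Preperfect Pstar := by
    rw [preperfect_iff_nhds]
    intro y hy U hU
    rcases hy with rfl | hyU
    · obtain ⟨N, hN⟩ := nhds_cyl hU
      refine ⟨cAdd (x N) (q N), ⟨hN ?_, hRP N (hxR N)⟩, ?_⟩
      · intro k hk
        have hD := ha N (x N) (mem_Cyl_self _ _)
        have hval := hD k (hk.trans (Nat.lt_succ_self N))
        rw [hval]
        simp [hpatdef, hzerodef, Nat.ne_of_lt hk]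
      · intro hcontr
        have hv := hpatm N _ (ha N (x N) (mem_Cyl_self _ _))
        rw [hcontr] at hv
        simp [hzerodef] at hv
    · obtain ⟨m, hym⟩ := mem_iUnion.mp hyU
      obtain ⟨w, ⟨hwU, hwR⟩, hwne⟩ := preperfect_iff_nhds.mp (hRperf m).acc y hym U hU
      exact ⟨w, ⟨hwU, hRP m hwR⟩, hwne⟩
  refine ⟨Pstar, ⟨⟨hPclosed, hPacc⟩, ⟨zero, mem_insert _ _⟩⟩, ?_⟩
  intro n N xx hne
  obtain ⟨s, hs⟩ := exists_CylL N xx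
  obtain ⟨m, hm⟩ := he (n, s)
  have hQm : Q m = P n ∩ Cyl N xx := by
    rw [hQdef]
    dsimp only
    simp only [hm, hs]
    rw [if_pos (hs ▸ hne)]
  have hDopen : IsOpen (cTranslate (D m) (q m)) := by
    rw [cTranslate_eq]
    exact (tHomeo (q m)).isOpenMap _ (isClopen_Cyl _ _).isOpen
  refine ⟨q m, hqEZ m, cTranslate (D m) (q m), hDopen, ?_, ?_⟩
  · exact ⟨x m, mem_cTranslate_iff.mpr (hRP m (hxR m)),
      mem_cTranslate_iff.mpr (ha m (x m) (mem_Cyl_self _ _))⟩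
  · rintro y ⟨hyP, hyD⟩
    rw [mem_cTranslate_iff] at hyP hyD
    have hmem : cAdd y (q m) ∈ R m := (hPD m) ▸ mem_inter hyP hyD
    have h2 : y ∈ Q m ∩ C m := by
      have h3 : y ∈ cTranslate (R m) (q m) := mem_cTranslate_iff.mpr hmem
      rwa [hRdef, cTranslate_cTranslate] at h3
    rw [hQm] at h2
    exact h2.1


end S17

namespace S17

lemma countable_EZ : {q : ℕ → Bool | EventuallyZero q}.Countable := by
  have heq : {q : ℕ → Bool | EventuallyZero q} =
      ⋃ N : ℕ, {q : ℕ → Bool | ∀ k, N ≤ k → q k = false} := by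
    ext q
    simp [EventuallyZero, Filter.eventually_atTop, mem_iUnion]
  rw [heq]
  refine countable_iUnion fun N => Set.Finite.countable ?_
  have hinj : Function.Injective
      (fun q : {q : ℕ → Bool | ∀ k, N ≤ k → q k = false} =>
        fun i : Fin N => (q : ℕ → Bool) i) := by
    rintro ⟨q, hq⟩ ⟨q', hq'⟩ h
    apply Subtype.ext
    funext k
    by_cases hk : k < N
    · exact congrFun h ⟨k, hk⟩
    · show q k = q' k
      rw [hq k (le_of_not_gt hk), hq' k (le_of_not_gt hk)]
  have : Finite {q : ℕ → Bool | ∀ k, N ≤ k → q k = false} := Finite.of_injective _ hinj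
  exact Set.toFinite _

lemma baire_contradiction {K : Set (ℕ → Bool)} (hK : IsClosed K) {M O : Set K}
    (hM : IsMeagre M) (hO : IsOpen O) (hne : O.Nonempty) (hsub : O ⊆ M) : False := by
  have hc : IsCompact K := hK.isCompact
  have : CompactSpace K := isCompact_iff_compactSpace.mp hc
  have : LocallyCompactSpace K := inferInstance
  have hd : Dense Mᶜ := dense_of_mem_residual hM
  obtain ⟨y, hyO, hyM⟩ := hd.inter_open_nonempty O hO hne
  exact hyM (hsub hyO)

lemma meagre_of_closed_nwd {X : Type*} [TopologicalSpace X] {s : Set X}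
    (hcl : IsClosed s) (hint : interior s = ∅) : IsMeagre s := by
  rw [isMeagre_iff_countable_union_isNowhereDense]
  refine ⟨{s}, ?_, countable_singleton s, by simp⟩
  intro t ht
  rw [mem_singleton_iff] at ht
  subst ht
  rwa [hcl.isNowhereDense_iff]

end S17

theorem stmt17 (A : Set (ℕ → Bool)) :
    CPM A ↔
      ∀ P : Set (ℕ → Bool), PerfectSet P →
        ∃ F : Set (ℕ → Bool), IsFsigma F ∧ A ⊆ F ∧
          ∀ q : ℕ → Bool, EventuallyZero q → MeagerIn F (cTranslate P q) := by
  constructor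
  · -- forward direction
    intro hA P hPperf
    obtain ⟨e, he⟩ := S17.countable_EZ.exists_eq_range
      ⟨fun _ => false, by simp [EventuallyZero]⟩
    obtain ⟨F, hFσ, hAF, hme⟩ := hA (fun n => cTranslate P (e n)) (fun n =>
      ⟨S17.perfect_cTranslate hPperf.1 _, hPperf.2.image _⟩)
    refine ⟨F, hFσ, hAF, fun q hq => ?_⟩
    have hq' : q ∈ range e := by rw [← he]; exact hq
    obtain ⟨n, rfl⟩ := hq'
    exact hme n
  · -- backward direction
    intro h P hPperf
    obtain ⟨Pstar, hPstar, hkey⟩ := S17.key_lemma P hPperf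
    obtain ⟨F, hFσ, hAF, hme⟩ := h Pstar hPstar
    obtain ⟨S, hScl, rfl⟩ := hFσ
    refine ⟨⋃ j, S j, ⟨S, hScl, rfl⟩, hAF, fun n => ?_⟩
    show IsMeagre _
    rw [preimage_iUnion]
    refine isMeagre_iUnion fun j => ?_
    have hTcl : IsClosed ((↑) ⁻¹' (S j) : Set (P n)) :=
      (hScl j).preimage continuous_subtype_val
    refine S17.meagre_of_closed_nwd hTcl ?_
    by_contra hne
    obtain ⟨⟨x, hxP⟩, hxint⟩ := nonempty_iff_ne_empty.mpr hne
    obtain ⟨O, hOsub, hOopen, hxO⟩ := mem_interior.mp hxint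
    obtain ⟨V, hVopen, hVeq⟩ := isOpen_induced_iff.mp hOopen
    have hxV : x ∈ V := by
      have : (⟨x, hxP⟩ : P n) ∈ O := hxO
      rw [← hVeq] at this
      exact this
    obtain ⟨N, hN⟩ := S17.nhds_cyl (hVopen.mem_nhds hxV)
    have hsub : P n ∩ S17.Cyl N x ⊆ S j := by
      rintro y ⟨hyP, hyC⟩
      have hyO : (⟨y, hyP⟩ : P n) ∈ O := by
        rw [← hVeq]
        exact hN hyC
      exact hOsub hyO
    obtain ⟨q, hqEZ, G, hGopen, hGne, hGsub⟩ :=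
      hkey n N x ⟨x, hxP, S17.mem_Cyl_self N x⟩
    have hm := hme q hqEZ
    refine S17.baire_contradiction (S17.perfect_cTranslate hPstar.1 q).closed hm
      (hGopen.preimage continuous_subtype_val) ?_ ?_
    · obtain ⟨y, hyK, hyG⟩ := hGne
      exact ⟨⟨y, hyK⟩, hyG⟩
    · rintro ⟨y, hyK⟩ hyG
      have hy : y ∈ P n ∩ S17.Cyl N x := hGsub ⟨hyK, hyG⟩
      show y ∈ ⋃ j, S j
      exact mem_iUnion.mpr ⟨j, hsub hy⟩
end

section
/- Let ℱ be a countable family of perfect subsets of a perfect Polish space X such that every nonempty open set U ⊆ X contains a nowhere dense member of ℱ. Then the σ-ideal MGR*(ℱ), consisting of all sets A ⊆ X covered by some F_σ-set F with F ∩ P meager in P for every P ∈ ℱ, does not satisfy the countable chain condition (there is an uncountable family of pairwise disjoint Borel sets not in MGR*(ℱ)). -/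
open Set
set_option linter.unusedSectionVars false

namespace Stmt18Aux

open Metric TopologicalSpace

/-! ### Generic small lemmas -/

lemma meagre_of_nwd {Y : Type*} [TopologicalSpace Y] {s : Set Y}
    (h : IsNowhereDense s) : IsMeagre s := by
  rw [isMeagre_iff_countable_union_isNowhereDense]
  exact ⟨{s}, by simpa using h, countable_singleton s, by simp⟩

lemma not_meagre_univ (Y : Type*) [TopologicalSpace Y] [BaireSpace Y] [Nonempty Y] :
    ¬ IsMeagre (univ : Set Y) := by
  intro h
  rw [IsMeagre, compl_univ] at h
  exact (dense_of_mem_residual h).nonempty.ne_empty rfl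

/-- A closed set that is not meagre has nonempty interior. -/
lemma interior_nonempty_of_closed_not_meagre {Y : Type*} [TopologicalSpace Y] {s : Set Y}
    (hc : IsClosed s) (hm : ¬ IsMeagre s) : (interior s).Nonempty := by
  rw [nonempty_iff_ne_empty]
  intro h
  exact hm (meagre_of_nwd (hc.isNowhereDense_iff.2 h))

/-- Escape from a nowhere dense set in any ball. -/
lemma nwd_escape {Y : Type*} [PseudoMetricSpace Y] {s : Set Y} (hs : IsNowhereDense s)
    {z : Y} {r : ℝ} (hr : 0 < r) : ∃ y, y ∈ ball z r ∧ y ∉ s := by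
  by_contra h
  push_neg at h
  have : ball z r ⊆ interior (closure s) :=
    interior_maximal (fun y hy => subset_closure (h y hy)) isOpen_ball
  rw [hs] at this
  exact this (mem_ball_self hr)

/-- Positive lower bound for finitely many positive reals. -/
lemma exists_pos_le_of_lt (n : ℕ) (g : ℕ → ℝ) (h : ∀ k, k < n → 0 < g k) :
    ∃ ε > (0:ℝ), ∀ k, k < n → ε ≤ g k := by
  induction n with
  | zero => exact ⟨1, one_pos, fun k hk => absurd hk (Nat.not_lt_zero k)⟩
  | succ m ih =>
    obtain ⟨ε, hε, hle⟩ := ih (fun k hk => h k (hk.trans (Nat.lt_succ_self m)))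
    refine ⟨min ε (g m), lt_min hε (h m (Nat.lt_succ_self m)), fun k hk => ?_⟩
    rcases Nat.lt_succ_iff_lt_or_eq.1 hk with h' | rfl
    · exact (min_le_left _ _).trans (hle k h')
    · exact min_le_right _ _

lemma not_countable_funNatBool : ¬ Countable (ℕ → Bool) := by
  classical
  intro h
  obtain ⟨f, hf⟩ := exists_surjective_nat (ℕ → Bool)
  apply Function.cantor_surjective (fun n => {m | f n m = true})
  intro S
  obtain ⟨n, hn⟩ := hf (fun m => decide (m ∈ S))
  refine ⟨n, ?_⟩
  ext m
  simp only [mem_setOf_eq, hn, decide_eq_true_eq]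

/-! ### The context -/

variable {X : Type*} [MetricSpace X] [CompleteSpace X] [SecondCountableTopology X]

/-- All data of the hypotheses, bundled. -/
structure Ctx (X : Type*) [MetricSpace X] where
  F : ℕ → Set X
  perf : ∀ n, Perfect (F n)
  nonemp : ∀ n, (F n).Nonempty
  dense : ∀ U : Set X, IsOpen U → U.Nonempty → ∃ n, F n ⊆ U ∧ IsNowhereDense (F n)

variable (C : Ctx X)

instance ctxNonempty (n : ℕ) : Nonempty ↥(C.F n) := (C.nonemp n).to_subtype

/-- a dense sequence in the `n`-th member. -/
noncomputable def Dpt (n : ℕ) (i : ℕ) : X := (denseSeq ↥(C.F n) i : X)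

lemma Dpt_mem (n i : ℕ) : Dpt C n i ∈ C.F n := (denseSeq ↥(C.F n) i).2

lemma Dpt_dense (n : ℕ) {z : X} (hz : z ∈ C.F n) {ε : ℝ} (hε : 0 < ε) :
    ∃ i, dist (Dpt C n i) z < ε := by
  have := denseRange_denseSeq ↥(C.F n)
  rw [denseRange_iff] at this
  obtain ⟨i, hi⟩ := this ⟨z, hz⟩ ε hε
  exact ⟨i, by simpa [Dpt, Subtype.dist_eq, dist_comm] using hi⟩

/-! ### Node data -/

/-- Data attached to a node of the tree: a member index, a center and a radius. -/
structure ND (X : Type*) where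
  n : ℕ
  c : X
  ρ : ℝ

/-- The "guard ball" of a node. -/
def mid (d : ND X) : Set X := closedBall d.c (2 * d.ρ)

def Good (d : ND X) : Prop :=
  0 < d.ρ ∧ C.F d.n ⊆ ball d.c d.ρ ∧ IsNowhereDense (C.F d.n)

/-- demand decoding -/
def iOf (j : ℕ) : ℕ := (Nat.unpair (j / 2)).1
def mOf (j : ℕ) : ℕ := (Nat.unpair (j / 2)).2

/-- The relation between a parent data `P` and the data `d` of its `j`-th child. -/
def Rel (P d : ND X) (j : ℕ) : Prop :=
  mid d ⊆ ball P.c P.ρ ∧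
  Disjoint (mid d) (C.F P.n) ∧
  ball d.c d.ρ ⊆ ball (Dpt C P.n (iOf j)) ((2:ℝ)⁻¹ ^ (mOf j)) ∧
  d.ρ ≤ (2:ℝ)⁻¹ ^ j ∧
  dist d.c (Dpt C P.n (iOf j)) ≤ (2:ℝ)⁻¹ ^ j

/-- The fundamental construction step. -/
lemma step (P : ND X) (hP : Good C P) (j : ℕ) (f : ∀ k, k < j → ND X)
    (hf : ∀ k hk, Rel C P (f k hk) k) :
    ∃ d : ND X, Good C d ∧ Rel C P d j ∧ ∀ k hk, Disjoint (mid (f k hk)) (mid d) := by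
  classical
  set z := Dpt C P.n (iOf j) with hzdef
  have hz : z ∈ C.F P.n := Dpt_mem C P.n (iOf j)
  have hzP : dist z P.c < P.ρ := by
    have := hP.2.1 hz; rwa [mem_ball] at this
  have hs : 0 < P.ρ - dist z P.c := sub_pos.2 hzP
  set s := P.ρ - dist z P.c with hsdef
  have hgap : ∀ k hk, 0 < dist z (f k hk).c - 2 * (f k hk).ρ := by
    intro k hk
    have hd := (hf k hk).2.1
    have hzm : z ∉ mid (f k hk) := fun hzm => (Set.disjoint_right.1 hd hz) hzm
    rw [mid, mem_closedBall, not_le] at hzm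
    linarith
  obtain ⟨δ0, hδ0, hδ0le⟩ := exists_pos_le_of_lt j
    (fun k => if hk : k < j then dist z (f k hk).c - 2 * (f k hk).ρ else 1)
    (by intro k hk; simpa only [dif_pos hk] using hgap k hk)
  have hpow : (0:ℝ) < (2:ℝ)⁻¹ ^ (mOf j) := by positivity
  have hpowj : (0:ℝ) < (2:ℝ)⁻¹ ^ j := by positivity
  set δ := min (min (s/4) ((2:ℝ)⁻¹ ^ (mOf j) / 2)) (min ((2:ℝ)⁻¹ ^ j) (δ0/2)) with hδdef
  have hδ : 0 < δ :=
    lt_min (lt_min (by linarith) (by linarith)) (lt_min hpowj (by linarith))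
  have hδ1 : δ ≤ s/4 := (min_le_left _ _).trans (min_le_left _ _)
  have hδ2 : δ ≤ (2:ℝ)⁻¹ ^ (mOf j) / 2 := (min_le_left _ _).trans (min_le_right _ _)
  have hδ3 : δ ≤ (2:ℝ)⁻¹ ^ j := (min_le_right _ _).trans (min_le_left _ _)
  have hδ4 : δ ≤ δ0/2 := (min_le_right _ _).trans (min_le_right _ _)
  obtain ⟨c, hc1, hc2⟩ := nwd_escape hP.2.2 (z := z) (half_pos hδ)
  rw [mem_ball] at hc1
  obtain ⟨r₀, hr₀, hr₀sub⟩ :=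
    (Metric.isOpen_iff.1 (C.perf P.n).closed.isOpen_compl) c hc2
  set ρ := min (r₀/4) (δ/8) with hρdef
  have hρ : 0 < ρ := lt_min (by linarith) (by linarith)
  have hρ1 : ρ ≤ r₀/4 := min_le_left _ _
  have hρ2 : ρ ≤ δ/8 := min_le_right _ _
  obtain ⟨n₁, hn₁sub, hn₁nwd⟩ := C.dense (ball c ρ) isOpen_ball ⟨c, mem_ball_self hρ⟩
  refine ⟨⟨n₁, c, ρ⟩, ⟨hρ, hn₁sub, hn₁nwd⟩, ?_, ?_⟩
  · unfold Rel mid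
    rw [← hzdef]
    refine ⟨?_, ?_, ?_, show ρ ≤ (2:ℝ)⁻¹ ^ j from hρ2.trans (by linarith),
      show dist c z ≤ (2:ℝ)⁻¹ ^ j from le_of_lt (by linarith)⟩
    · intro y hy
      simp only [mem_closedBall] at hy
      rw [mem_ball]
      have h4 : dist y P.c ≤ dist y c + dist c z + dist z P.c := dist_triangle4 y c z P.c
      have hzPc : dist z P.c = P.ρ - s := by rw [hsdef]; ring
      linarith
    · rw [Set.disjoint_left]
      intro y hy hyF
      simp only [mem_closedBall] at hy
      have : y ∈ ball c r₀ := by rw [mem_ball]; linarith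
      exact hr₀sub this hyF
    · intro y hy
      simp only [mem_ball] at hy ⊢
      have : dist y z ≤ dist y c + dist c z := dist_triangle y c z
      linarith
  · intro k hk
    rw [Set.disjoint_right]
    intro y hy hy'
    unfold mid at hy hy'
    simp only [mem_closedBall] at hy hy'
    have hgapk : δ0 ≤ dist z (f k hk).c - 2 * (f k hk).ρ := by
      have := hδ0le k hk; rwa [dif_pos hk] at this
    have t1 : dist z (f k hk).c ≤ dist z y + dist y (f k hk).c := dist_triangle z y (f k hk).c
    have t2 : dist z y ≤ dist z c + dist c y := dist_triangle z c y
    have t3 : dist z c = dist c z := dist_comm z c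
    have t4 : dist c y = dist y c := dist_comm c y
    linarith

/-! ### The family of children of a node -/

def FamInv (P : ND X) (j : ℕ) (f : ∀ k, k < j → ND X) : Prop :=
  (∀ k hk, Good C (f k hk) ∧ Rel C P (f k hk) k) ∧
  ∀ k₁ h₁ k₂ h₂, k₁ ≠ k₂ → Disjoint (mid (f k₁ h₁)) (mid (f k₂ h₂))

noncomputable def famF (P : ND X) (hP : Good C P) (j : ℕ)
    (Fj : {f : ∀ k, k < j → ND X // FamInv C P j f}) : ∀ k, k < j + 1 → ND X :=
  fun k _ => if h : k < j then Fj.1 k h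
    else Classical.choose (step C P hP j Fj.1 (fun k hk => (Fj.2.1 k hk).2))

lemma famF_inv (P : ND X) (hP : Good C P) (j : ℕ)
    (Fj : {f : ∀ k, k < j → ND X // FamInv C P j f}) :
    FamInv C P (j+1) (famF C P hP j Fj) := by
  have hdspec := Classical.choose_spec (step C P hP j Fj.1 (fun k hk => (Fj.2.1 k hk).2))
  constructor
  · intro k hk
    unfold famF
    by_cases h : k < j
    · rw [dif_pos h]; exact Fj.2.1 k h
    · have hkj : k = j := by omega
      rw [dif_neg h]
      subst hkj
      exact ⟨hdspec.1, hdspec.2.1⟩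
  · intro k₁ h₁ k₂ h₂ hne
    unfold famF
    by_cases ha : k₁ < j <;> by_cases hb : k₂ < j
    · rw [dif_pos ha, dif_pos hb]; exact Fj.2.2 k₁ ha k₂ hb hne
    · rw [dif_pos ha, dif_neg hb]; exact hdspec.2.2 k₁ ha
    · rw [dif_neg ha, dif_pos hb]; exact (hdspec.2.2 k₂ hb).symm
    · exact absurd (by omega : k₁ = k₂) hne

noncomputable def famAux (P : ND X) (hP : Good C P) :
    (j : ℕ) → {f : ∀ k, k < j → ND X // FamInv C P j f}
  | 0 => ⟨fun k hk => absurd hk (Nat.not_lt_zero k),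
      fun k hk => absurd hk (Nat.not_lt_zero k),
      fun k₁ h₁ => absurd h₁ (Nat.not_lt_zero k₁)⟩
  | (j+1) => ⟨famF C P hP j (famAux P hP j), famF_inv C P hP j (famAux P hP j)⟩

lemma famAux_agree (P : ND X) (hP : Good C P) :
    ∀ (m j : ℕ), j ≤ m → ∀ k (hk : k < j) (hk' : k < m),
    (famAux C P hP m).1 k hk' = (famAux C P hP j).1 k hk := by
  intro m
  induction m with
  | zero => intro j hj k hk hk'; omega
  | succ m ih =>
    intro j hj k hk hk'
    rcases eq_or_lt_of_le hj with rfl | hj'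
    · rfl
    · have hjm : j ≤ m := by omega
      have hkm : k < m := lt_of_lt_of_le hk hjm
      have : (famAux C P hP (m+1)).1 = famF C P hP m (famAux C P hP m) := rfl
      rw [this]
      unfold famF
      rw [dif_pos hkm]
      exact ih j hjm k hk hkm

/-- The data of the `j`-th child of a node with data `P`. -/
noncomputable def chD (P : ND X) (hP : Good C P) (j : ℕ) : ND X :=
  (famAux C P hP (j+1)).1 j (Nat.lt_succ_self j)

lemma chD_good (P : ND X) (hP : Good C P) (j : ℕ) : Good C (chD C P hP j) :=
  ((famAux C P hP (j+1)).2.1 j (Nat.lt_succ_self j)).1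

lemma chD_rel (P : ND X) (hP : Good C P) (j : ℕ) : Rel C P (chD C P hP j) j :=
  ((famAux C P hP (j+1)).2.1 j (Nat.lt_succ_self j)).2

lemma chD_disj (P : ND X) (hP : Good C P) {k j : ℕ} (hne : k ≠ j) :
    Disjoint (mid (chD C P hP k)) (mid (chD C P hP j)) := by
  rcases lt_or_gt_of_ne hne with h | h
  · have e : chD C P hP k = (famAux C P hP (j+1)).1 k (by omega) :=
      (famAux_agree C P hP (j+1) (k+1) (by omega) k (Nat.lt_succ_self k) (by omega)).symm
    rw [e]
    exact (famAux C P hP (j+1)).2.2 k (by omega) j (Nat.lt_succ_self j) hne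
  · have e : chD C P hP j = (famAux C P hP (k+1)).1 j (by omega) :=
      (famAux_agree C P hP (k+1) (j+1) (by omega) j (Nat.lt_succ_self j) (by omega)).symm
    rw [e]
    exact (famAux C P hP (k+1)).2.2 k (Nat.lt_succ_self k) j (by omega) hne

/-! ### The tree -/

abbrev Label := ℕ × Bool
abbrev Node := List Label

def enc (l : Label) : ℕ := 2 * l.1 + (if l.2 then 1 else 0)

lemma enc_injective : Function.Injective enc := by
  rintro ⟨a, b⟩ ⟨a', b'⟩ h
  unfold enc at h
  cases b <;> cases b' <;> simp_all [Prod.mk.injEq] <;> omega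

lemma iOf_enc (i m : ℕ) (b : Bool) : iOf (enc (Nat.pair i m, b)) = i := by
  have : enc (Nat.pair i m, b) / 2 = Nat.pair i m := by
    unfold enc; cases b <;> simp <;> omega
  rw [iOf, this, Nat.unpair_pair]

lemma mOf_enc (i m : ℕ) (b : Bool) : mOf (enc (Nat.pair i m, b)) = m := by
  have : enc (Nat.pair i m, b) / 2 = Nat.pair i m := by
    unfold enc; cases b <;> simp <;> omega
  rw [mOf, this, Nat.unpair_pair]

noncomputable def rootD : {d : ND X // Good C d} := by
  classical
  have hne : (ball ((C.nonemp 0).choose) 1).Nonempty := ⟨_, mem_ball_self one_pos⟩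
  have h := C.dense _ isOpen_ball hne
  exact ⟨⟨h.choose, (C.nonemp 0).choose, 1⟩, one_pos, h.choose_spec.1, h.choose_spec.2⟩

/-- The data attached to each node of the tree. -/
noncomputable def dat : Node → {d : ND X // Good C d} := fun u =>
  List.reverseRecOn u (rootD C)
    (fun _v lab ih => ⟨chD C ih.1 ih.2 (enc lab), chD_good C ih.1 ih.2 (enc lab)⟩)

lemma dat_concat (u : Node) (lab : Label) :
    (dat C (u ++ [lab])).1 = chD C (dat C u).1 (dat C u).2 (enc lab) := by
  rw [dat, List.reverseRecOn_concat]
  rfl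

/-- the member attached to a node -/
noncomputable def Gd (u : Node) : Set X := C.F ((dat C u).1).n

lemma Gd_sub (u : Node) : Gd C u ⊆ ball ((dat C u).1).c ((dat C u).1).ρ := (dat C u).2.2.1

lemma Gd_nonempty (u : Node) : (Gd C u).Nonempty := C.nonemp _

lemma Gd_closed (u : Node) : IsClosed (Gd C u) := (C.perf _).closed

lemma rel_concat (u : Node) (lab : Label) :
    Rel C (dat C u).1 (dat C (u ++ [lab])).1 (enc lab) := by
  rw [dat_concat]; exact chD_rel C (dat C u).1 (dat C u).2 (enc lab)

lemma mid_disj_siblings (u : Node) {lab lab' : Label} (h : lab ≠ lab') :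
    Disjoint (mid (dat C (u ++ [lab])).1) (mid (dat C (u ++ [lab'])).1) := by
  rw [dat_concat, dat_concat]
  exact chD_disj C (dat C u).1 (dat C u).2 (fun he => h (enc_injective he))

/-! ### Structural lemmas about the tree -/

lemma ball_sub_mid (d : ND X) (hd : Good C d) : ball d.c d.ρ ⊆ mid d :=
  ball_subset_closedBall.trans (closedBall_subset_closedBall (by have := hd.1; linarith))

lemma Gd_sub_mid (u : Node) : Gd C u ⊆ mid (dat C u).1 :=
  (Gd_sub C u).trans (ball_sub_mid C _ (dat C u).2)

lemma prefix_of_concat {u w : Node} {lab : Label} (h : u <+: w ++ [lab]) (hne : u ≠ w ++ [lab]) :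
    u <+: w := by
  obtain ⟨t, ht⟩ := h
  rcases List.eq_nil_or_concat t with rfl | ⟨t', lab', rfl⟩
  · exact absurd ((by simpa using ht) : u = w ++ [lab]) hne
  · rw [List.concat_eq_append, ← List.append_assoc] at ht
    have : u ++ t' = w := by
      have := congrArg List.dropLast ht
      simpa using this
    exact ⟨t', this⟩

lemma strict_prefix_decomp {u v : Node} (h : u <+: v) (hne : u ≠ v) :
    ∃ (lab : Label) (t : Node), v = u ++ [lab] ++ t := by
  obtain ⟨t, ht⟩ := h
  cases t with
  | nil => exact absurd (by simpa using ht) hne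
  | cons lab t' => exact ⟨lab, t', by simp [← ht]⟩

/-- nesting of guard balls along the tree -/
lemma mid_sub_of_strict_prefix :
    ∀ (v u : Node), u <+: v → u ≠ v → mid (dat C v).1 ⊆ ball ((dat C u).1).c ((dat C u).1).ρ := by
  intro v
  induction v using List.reverseRecOn with
  | nil => intro u h hne; exact absurd (by simpa using h) hne
  | append_singleton w lab ih =>
    intro u h hne
    by_cases huw : u = w
    · subst huw
      exact (rel_concat C u lab).1
    · have h' : u <+: w := prefix_of_concat h hne
      exact ((rel_concat C w lab).1.trans (ball_sub_mid C _ (dat C w).2)).trans (ih u h' huw)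

lemma mid_sub_of_prefix {u v : Node} (h : u <+: v) : mid (dat C v).1 ⊆ mid (dat C u).1 := by
  by_cases hne : u = v
  · subst hne; exact subset_rfl
  · exact (mid_sub_of_strict_prefix C v u h hne).trans (ball_sub_mid C _ (dat C u).2)

/-- the guard ball of a strict descendant avoids the member of the ancestor -/
lemma mid_disj_Gd_of_strict_prefix {u v : Node} (h : u <+: v) (hne : u ≠ v) :
    Disjoint (mid (dat C v).1) (Gd C u) := by
  obtain ⟨lab, t, rfl⟩ := strict_prefix_decomp h hne
  have h1 : mid (dat C (u ++ [lab] ++ t)).1 ⊆ mid (dat C (u ++ [lab])).1 :=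
    mid_sub_of_prefix C ⟨t, rfl⟩
  exact Disjoint.mono_left h1 (rel_concat C u lab).2.1

lemma exists_split : ∀ (u v : Node), ¬ u <+: v → ¬ v <+: u →
    ∃ (w : Node) (a b : Label), a ≠ b ∧ w ++ [a] <+: u ∧ w ++ [b] <+: v := by
  intro u
  induction u with
  | nil => intro v h1 _; exact absurd List.nil_prefix h1
  | cons a u' ih =>
    intro v h1 h2
    cases v with
    | nil => exact absurd List.nil_prefix h2
    | cons b v' =>
      by_cases hab : a = b
      · subst hab
        have h1' : ¬ u' <+: v' := fun h => h1 (List.cons_prefix_cons.2 ⟨rfl, h⟩)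
        have h2' : ¬ v' <+: u' := fun h => h2 (List.cons_prefix_cons.2 ⟨rfl, h⟩)
        obtain ⟨w, x, y, hxy, hx, hy⟩ := ih v' h1' h2'
        exact ⟨a :: w, x, y, hxy,
          by rw [List.cons_append]; exact List.cons_prefix_cons.2 ⟨rfl, hx⟩,
          by rw [List.cons_append]; exact List.cons_prefix_cons.2 ⟨rfl, hy⟩⟩
      · exact ⟨[], a, b, hab,
          by simpa using List.cons_prefix_cons.2 ⟨rfl, List.nil_prefix⟩,
          by simpa using List.cons_prefix_cons.2 ⟨rfl, List.nil_prefix⟩⟩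

/-- incomparable nodes have disjoint guard balls -/
lemma mid_disj_incomp {u v : Node} (h1 : ¬ u <+: v) (h2 : ¬ v <+: u) :
    Disjoint (mid (dat C u).1) (mid (dat C v).1) := by
  obtain ⟨w, a, b, hab, ha, hb⟩ := exists_split u v h1 h2
  exact (mid_disj_siblings C w hab).mono (mid_sub_of_prefix C ha) (mid_sub_of_prefix C hb)

/-- distinct nodes have disjoint members -/
lemma Gd_disj {u v : Node} (h : u ≠ v) : Disjoint (Gd C u) (Gd C v) := by
  by_cases h1 : u <+: v
  · exact ((mid_disj_Gd_of_strict_prefix C h1 h).mono_left (Gd_sub_mid C v)).symm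
  · by_cases h2 : v <+: u
    · exact (mid_disj_Gd_of_strict_prefix C h2 (Ne.symm h)).mono_left (Gd_sub_mid C u)
    · exact (mid_disj_incomp C h1 h2).mono (Gd_sub_mid C u) (Gd_sub_mid C v)

/-! ### Subtrees, limit sets -/

/-- the subtree selected by `x` -/
def T (x : ℕ → Bool) : Set Node :=
  {u | ∀ (l : ℕ) (h : l < u.length), (u[l]'h).2 = x l}

lemma T_nil (x : ℕ → Bool) : ([] : Node) ∈ T x := by
  intro l h; simp at h

lemma T_prefix {x : ℕ → Bool} {u v : Node} (h : u <+: v) (hv : v ∈ T x) : u ∈ T x := by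
  intro l hl
  rw [List.IsPrefix.getElem h hl]
  exact hv l (lt_of_lt_of_le hl h.length_le)

lemma T_concat {x : ℕ → Bool} {u : Node} (hu : u ∈ T x) (q : ℕ) :
    (u ++ [(q, x u.length)] : Node) ∈ T x := by
  intro l hl
  rcases lt_or_ge l u.length with h | h
  · rw [List.getElem_append_left h]
    exact hu l h
  · have hl' : l = u.length := by
      simp only [List.length_append, List.length_singleton] at hl
      omega
    subst hl'
    simp

lemma T_concat_bit {x : ℕ → Bool} {u : Node} {q : ℕ} {b : Bool}
    (h : (u ++ [(q, b)] : Node) ∈ T x) : b = x u.length := by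
  have := h u.length (by simp)
  simpa using this

/-- the pieces of the limit Cantor-like set, below a given node -/
def KK (x : ℕ → Bool) (u : Node) : Set X :=
  closure (⋃ (v : Node) (_ : v ∈ T x ∧ u <+: v), Gd C v)

lemma KK_closed (x : ℕ → Bool) (u : Node) : IsClosed (KK C x u) := isClosed_closure

lemma Gd_sub_KK {x : ℕ → Bool} {u v : Node} (hv : v ∈ T x) (h : u <+: v) :
    Gd C v ⊆ KK C x u :=
  (subset_iUnion₂ (s := fun v _ => Gd C v) v ⟨hv, h⟩).trans subset_closure

lemma KK_sub_mid (x : ℕ → Bool) (u : Node) : KK C x u ⊆ mid (dat C u).1 := by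
  apply closure_minimal _ Metric.isClosed_closedBall
  refine iUnion₂_subset fun v hv => (Gd_sub_mid C v).trans (mid_sub_of_prefix C hv.2)

lemma KK_mono_child {x : ℕ → Bool} {u w : Node} (h : u <+: w) :
    KK C x w ⊆ KK C x u :=
  closure_mono (iUnion₂_subset fun v hv =>
    (subset_iUnion₂ (s := fun v _ => Gd C v) v ⟨hv.1, h.trans hv.2⟩))

/-- members at nodes outside the subtree are disjoint from the limit set -/
lemma KK_disj_Gd_notT {x : ℕ → Bool} {u : Node} (hu : u ∉ T x) :
    Disjoint (KK C x []) (Gd C u) := by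
  have hρ : 0 < ((dat C u).1).ρ := (dat C u).2.1
  have hdisj : ∀ v, v ∈ T x → Disjoint (Gd C v) (mid (dat C u).1) := by
    intro v hv
    have hvu : ¬ u <+: v := fun h => hu (T_prefix h hv)
    by_cases h2 : v <+: u
    · have hne : v ≠ u := by rintro rfl; exact hvu List.prefix_rfl
      exact (mid_disj_Gd_of_strict_prefix C h2 hne).symm
    · exact (mid_disj_incomp C h2 hvu).mono_left (Gd_sub_mid C v)
  have hcl : KK C x [] ⊆ {y | 2 * ((dat C u).1).ρ ≤ dist y ((dat C u).1).c} := by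
    apply closure_minimal _ (isClosed_le continuous_const (continuous_id.dist continuous_const))
    rintro y hy
    simp only [mem_iUnion] at hy
    obtain ⟨v, hv, hyv⟩ := hy
    have : y ∉ mid (dat C u).1 := Set.disjoint_left.1 (hdisj v hv.1) hyv
    rw [mid, mem_closedBall, not_le] at this
    exact le_of_lt this
  rw [Set.disjoint_left]
  intro y hy hyG
  have h1 := hcl hy
  have h2 := Gd_sub C u hyG
  rw [mem_ball] at h2
  simp only [mem_setOf_eq] at h1
  linarith

/-- inside the subtree, every member has arbitrarily small member descendants near
any of its points -/
lemma child_member {x : ℕ → Bool} {u : Node} (hu : u ∈ T x) {z : X} (hz : z ∈ Gd C u)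
    {ε : ℝ} (hε : 0 < ε) :
    ∃ w, w ∈ T x ∧ u <+: w ∧ u ≠ w ∧ Gd C w ⊆ ball z ε := by
  obtain ⟨i, hi⟩ := Dpt_dense C _ hz (half_pos hε)
  obtain ⟨m, hm⟩ := exists_pow_lt_of_lt_one (half_pos hε) (by norm_num : (2:ℝ)⁻¹ < 1)
  set lab : Label := (Nat.pair i m, x u.length) with hlabdef
  refine ⟨u ++ [lab], T_concat hu (Nat.pair i m), ⟨[lab], rfl⟩, by simp, ?_⟩
  have h3 := (rel_concat C u lab).2.2.1
  rw [hlabdef, iOf_enc, mOf_enc] at h3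
  intro y hy
  have hy' := h3 (Gd_sub C _ hy)
  rw [mem_ball] at hy' ⊢
  have ht := dist_triangle y (Dpt C ((dat C u).1).n i) z
  linarith

/-- every ball around a point of the limit set contains a whole member from the subtree,
which can moreover be chosen distinct from any fixed node -/
lemma chunk {x : ℕ → Bool} {p : X} (hp : p ∈ KK C x []) {ε : ℝ} (hε : 0 < ε) (u₀ : Node) :
    ∃ w, w ∈ T x ∧ w ≠ u₀ ∧ Gd C w ⊆ ball p ε := by
  rw [KK, Metric.mem_closure_iff] at hp
  obtain ⟨y, hy, hyd⟩ := hp (ε/4) (by linarith)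
  simp only [mem_iUnion] at hy
  obtain ⟨v, hv, hyv⟩ := hy
  obtain ⟨w₁, hw₁T, _, _, hw₁sub⟩ := child_member C hv.1 hyv (ε := ε/4) (by linarith)
  by_cases h : w₁ = u₀
  · obtain ⟨z, hz⟩ := Gd_nonempty C w₁
    have hzy := hw₁sub hz
    rw [mem_ball] at hzy
    obtain ⟨w₂, hw₂T, _, hne, hw₂sub⟩ := child_member C hw₁T hz (ε := ε/2) (by linarith)
    refine ⟨w₂, hw₂T, fun h2 => hne (by rw [h, h2]), ?_⟩
    intro y' hy'
    have := hw₂sub hy'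
    rw [mem_ball] at this ⊢
    have t1 := dist_triangle y' z y
    have t2 := dist_triangle y' y p
    have t3 : dist y p = dist p y := dist_comm y p
    have t4 := dist_triangle y' z p
    have t5 := dist_triangle z y p
    linarith
  · refine ⟨w₁, hw₁T, h, ?_⟩
    intro y' hy'
    have := hw₁sub hy'
    rw [mem_ball] at this ⊢
    have t1 := dist_triangle y' y p
    have t3 : dist y p = dist p y := dist_comm y p
    linarith

/-! ### The sets `B x` -/

/-- The distinguished Borel set attached to `x`. -/
noncomputable def B (x : ℕ → Bool) : Set X := KK C x [] \ ⋃ (u : Node), Gd C u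

lemma KK_nil_nonempty (x : ℕ → Bool) : (KK C x []).Nonempty := by
  obtain ⟨z, hz⟩ := Gd_nonempty C ([] : Node)
  exact ⟨z, Gd_sub_KK C (T_nil x) List.nil_prefix hz⟩

lemma pre_Gd_nwd (x : ℕ → Bool) (u : Node) :
    IsNowhereDense ((Subtype.val ⁻¹' (Gd C u)) : Set ↥(KK C x [])) := by
  by_cases hu : u ∈ T x
  · have hc : IsClosed ((Subtype.val ⁻¹' (Gd C u)) : Set ↥(KK C x [])) :=
      (Gd_closed C u).preimage continuous_subtype_val
    rw [hc.isNowhereDense_iff, interior_eq_empty_iff_dense_compl, Metric.dense_iff]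
    rintro ⟨p, hp⟩ r hr
    obtain ⟨w, hwT, hwne, hwsub⟩ := chunk C hp hr u
    obtain ⟨q, hq⟩ := Gd_nonempty C w
    refine ⟨⟨q, Gd_sub_KK C hwT List.nil_prefix hq⟩, ?_, ?_⟩
    · rw [mem_ball, Subtype.dist_eq]
      exact mem_ball.1 (hwsub hq)
    · simp only [mem_compl_iff, mem_preimage]
      exact fun hqu => Set.disjoint_left.1 (Gd_disj C hwne) hq hqu
  · have : ((Subtype.val ⁻¹' (Gd C u)) : Set ↥(KK C x [])) = ∅ := by
      ext ⟨y, hy⟩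
      simp only [mem_preimage, mem_empty_iff_false, iff_false]
      exact fun hyG => Set.disjoint_left.1 (KK_disj_Gd_notT C hu) hy hyG
    rw [this]
    exact isNowhereDense_empty

lemma pre_union_meagre (x : ℕ → Bool) :
    IsMeagre ((Subtype.val ⁻¹' (⋃ u : Node, Gd C u)) : Set ↥(KK C x [])) := by
  rw [preimage_iUnion, IsMeagre, compl_iUnion]
  exact countable_iInter_mem.mpr fun u => meagre_of_nwd (pre_Gd_nwd C x u)

lemma B_nonempty (x : ℕ → Bool) : (B C x).Nonempty := by
  haveI : CompleteSpace ↥(KK C x []) := (KK_closed C x []).completeSpace_coe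
  haveI : Nonempty ↥(KK C x []) := (KK_nil_nonempty C x).to_subtype
  by_contra h
  rw [not_nonempty_iff_eq_empty] at h
  have hsub : (univ : Set ↥(KK C x [])) ⊆
      Subtype.val ⁻¹' (⋃ u : Node, Gd C u) := by
    rintro ⟨y, hy⟩ -
    simp only [mem_preimage]
    by_contra hy2
    have : y ∈ B C x := ⟨hy, hy2⟩
    rw [h] at this
    exact this
  exact not_meagre_univ ↥(KK C x []) ((pre_union_meagre C x).mono hsub)

lemma B_not_covered (x : ℕ → Bool) (s : ℕ → Set X) (hs : ∀ k, IsClosed (s k))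
    (htr : ∀ k n, IsMeagre ((Subtype.val ⁻¹' (s k)) : Set ↥(C.F n)))
    (hsub : B C x ⊆ ⋃ k, s k) : False := by
  haveI : CompleteSpace ↥(KK C x []) := (KK_closed C x []).completeSpace_coe
  haveI : Nonempty ↥(KK C x []) := (KK_nil_nonempty C x).to_subtype
  have hcov : (univ : Set ↥(KK C x [])) ⊆
      (Subtype.val ⁻¹' (⋃ u : Node, Gd C u)) ∪ ⋃ k, (Subtype.val ⁻¹' (s k)) := by
    rintro ⟨y, hy⟩ -
    by_cases hyG : y ∈ ⋃ u : Node, Gd C u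
    · exact Or.inl hyG
    · have hyB : y ∈ B C x := ⟨hy, hyG⟩
      obtain ⟨k, hk⟩ := mem_iUnion.1 (hsub hyB)
      exact Or.inr (mem_iUnion.2 ⟨k, hk⟩)
  have hex : ¬ ∀ k, IsMeagre ((Subtype.val ⁻¹' (s k)) : Set ↥(KK C x [])) := by
    intro hall
    apply not_meagre_univ ↥(KK C x [])
    have m1 := pre_union_meagre C x
    have m2 : IsMeagre (⋃ k, ((Subtype.val ⁻¹' (s k)) : Set ↥(KK C x []))) :=
      isMeagre_iUnion hall
    have : IsMeagre ((Subtype.val ⁻¹' (⋃ u : Node, Gd C u)) ∪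
        ⋃ k, ((Subtype.val ⁻¹' (s k)) : Set ↥(KK C x []))) := by
      rw [IsMeagre, compl_union]
      exact Filter.inter_mem m1 m2
    exact this.mono hcov
  push_neg at hex
  obtain ⟨k, hk⟩ := hex
  have hcl : IsClosed ((Subtype.val ⁻¹' (s k)) : Set ↥(KK C x [])) :=
    (hs k).preimage continuous_subtype_val
  obtain ⟨⟨p, hp⟩, hpint⟩ := interior_nonempty_of_closed_not_meagre hcl hk
  obtain ⟨r, hr, hball⟩ := Metric.isOpen_iff.1 isOpen_interior _ hpint
  obtain ⟨w, hwT, _, hwsub⟩ := chunk C hp hr []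
  have hGdsub : Gd C w ⊆ s k := by
    intro q hq
    have hqK : q ∈ KK C x [] := Gd_sub_KK C hwT List.nil_prefix hq
    have hmem : (⟨q, hqK⟩ : ↥(KK C x [])) ∈ ball (⟨p, hp⟩ : ↥(KK C x [])) r := by
      rw [mem_ball, Subtype.dist_eq]
      exact mem_ball.1 (hwsub hq)
    have h5 : (⟨q, hqK⟩ : ↥(KK C x [])) ∈ Subtype.val ⁻¹' (s k) :=
      interior_subset (hball hmem)
    exact h5
  have hnm := htr k ((dat C w).1).n
  have huniv : ((Subtype.val ⁻¹' (s k)) : Set ↥(C.F ((dat C w).1).n)) = univ := by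
    ext ⟨q, hq⟩
    simpa using hGdsub hq
  rw [huniv] at hnm
  haveI : Nonempty ↥(C.F ((dat C w).1).n) := ctxNonempty C _
  haveI : CompleteSpace ↥(C.F ((dat C w).1).n) := ((C.perf _).closed).completeSpace_coe
  exact not_meagre_univ _ hnm

/-! ### Descent along the tree and disjointness -/

lemma KK_decomp {x : ℕ → Bool} {u : Node} (hu : u ∈ T x) {p : X}
    (hp : p ∈ KK C x u) (hpG : ∀ v : Node, p ∉ Gd C v) :
    ∃ q : ℕ, p ∈ KK C x (u ++ [(q, x u.length)]) := by
  by_contra hno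
  push_neg at hno
  obtain ⟨r₀, hr₀, hr₀sub⟩ :=
    Metric.isOpen_iff.1 (Gd_closed C u).isOpen_compl p (hpG u)
  obtain ⟨J, hJ⟩ := exists_pow_lt_of_lt_one (show (0:ℝ) < r₀/4 by linarith)
    (by norm_num : (2:ℝ)⁻¹ < 1)
  have hnear : ∀ q : ℕ, ∃ rq > (0:ℝ),
      ball p rq ⊆ (KK C x (u ++ [(q, x u.length)]))ᶜ := by
    intro q
    obtain ⟨rq, hrq, hsub⟩ :=
      Metric.isOpen_iff.1 (KK_closed C x _).isOpen_compl p (hno q)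
    exact ⟨rq, hrq, hsub⟩
  choose rfun hrpos hrsub using hnear
  obtain ⟨ε₁, hε₁, hε₁le⟩ := exists_pos_le_of_lt J rfun (fun k _ => hrpos k)
  set ε := min ε₁ (r₀/4) with hεdef
  have hε : 0 < ε := lt_min hε₁ (by linarith)
  rw [KK, Metric.mem_closure_iff] at hp
  obtain ⟨y, hy, hyd⟩ := hp ε hε
  simp only [mem_iUnion] at hy
  obtain ⟨v, ⟨hvT, hvpre⟩, hyv⟩ := hy
  by_cases hvu : v = u
  · subst hvu
    have : y ∈ ball p r₀ := by
      rw [mem_ball, dist_comm]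
      exact lt_of_lt_of_le hyd ((min_le_right _ _).trans (by linarith))
    exact hr₀sub this hyv
  · obtain ⟨lab, t, rfl⟩ := strict_prefix_decomp hvpre (Ne.symm hvu)
    have hlen : u.length < (u ++ [lab] ++ t).length := by
      simp [List.length_append]
    have hget : (u ++ [lab] ++ t)[u.length]'hlen = lab := by
      have h1 : (u ++ [lab] ++ t) = u ++ (lab :: t) := by simp
      simp [List.getElem_of_eq h1, List.getElem_append_right (le_refl u.length)]
    have hlab2 : lab.2 = x u.length := by
      have := hvT u.length hlen
      rw [hget] at this
      exact this
    obtain ⟨q, b⟩ := lab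
    simp only at hlab2
    subst hlab2
    have hyKKw : y ∈ KK C x (u ++ [(q, x u.length)]) :=
      Gd_sub_KK C hvT ⟨t, rfl⟩ hyv
    set j := enc (q, x u.length) with hjdef
    by_cases hfar : J ≤ j
    · have h1 := KK_sub_mid C x _ hyKKw
      rw [mid, mem_closedBall] at h1
      have hrel := rel_concat C u (q, x u.length)
      have hρw := hrel.2.2.2.1
      have hcw := hrel.2.2.2.2
      set z := Dpt C ((dat C u).1).n (iOf (enc (q, x u.length))) with hzdef
      have hzGu : z ∈ Gd C u := Dpt_mem C _ _
      have hpz : r₀ ≤ dist z p := by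
        by_contra hlt
        push_neg at hlt
        exact hr₀sub (by rwa [mem_ball]) hzGu
      have hpowle : ((2:ℝ)⁻¹) ^ j ≤ ((2:ℝ)⁻¹) ^ J :=
        pow_le_pow_of_le_one (by norm_num) (by norm_num) hfar
      have t1 : dist y z ≤ dist y ((dat C (u ++ [(q, x u.length)])).1).c +
          dist ((dat C (u ++ [(q, x u.length)])).1).c z := dist_triangle _ _ _
      have t2 : dist z p ≤ dist z y + dist y p := dist_triangle _ _ _
      have t3 : dist z y = dist y z := dist_comm _ _
      have t4 : dist y p = dist p y := dist_comm _ _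
      have hεr : ε ≤ r₀/4 := min_le_right _ _
      linarith
    · push_neg at hfar
      have hqJ : q < J := by
        have : q ≤ j := by rw [hjdef]; unfold enc; simp; omega
        omega
      have : y ∈ ball p (rfun q) := by
        rw [mem_ball, dist_comm]
        exact lt_of_lt_of_le hyd ((min_le_left _ _).trans (hε₁le q hqJ))
      exact hrsub q this hyKKw

lemma exists_node_at_depth {x : ℕ → Bool} {p : X} (hpB : p ∈ B C x) :
    ∀ l : ℕ, ∃ u : Node, u ∈ T x ∧ u.length = l ∧ p ∈ KK C x u := by
  have hpG : ∀ v : Node, p ∉ Gd C v := by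
    intro v hv
    exact hpB.2 (mem_iUnion.2 ⟨v, hv⟩)
  intro l
  induction l with
  | zero => exact ⟨[], T_nil x, rfl, hpB.1⟩
  | succ l ih =>
    obtain ⟨u, huT, hlen, hpu⟩ := ih
    obtain ⟨q, hq⟩ := KK_decomp C huT hpu hpG
    exact ⟨u ++ [(q, x u.length)], T_concat huT q, by simp [hlen], hq⟩

lemma B_disjoint {x y : ℕ → Bool} (hxy : x ≠ y) : Disjoint (B C x) (B C y) := by
  rw [Set.disjoint_left]
  intro p hpx hpy
  obtain ⟨l₀, hl₀⟩ := Function.ne_iff.1 hxy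
  obtain ⟨u, huT, hulen, hpu⟩ := exists_node_at_depth C hpx (l₀+1)
  obtain ⟨v, hvT, hvlen, hpv⟩ := exists_node_at_depth C hpy (l₀+1)
  have huv : u = v := by
    by_contra hne
    have h1 : ¬ u <+: v := fun h => hne (h.eq_of_length (by rw [hulen, hvlen]))
    have h2 : ¬ v <+: u := fun h => hne ((h.eq_of_length (by rw [hvlen, hulen])).symm)
    have hd := mid_disj_incomp C h1 h2
    exact Set.disjoint_left.1 hd (KK_sub_mid C x u hpu) (KK_sub_mid C y v hpv)
  subst huv
  have hx' := huT l₀ (by omega)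
  have hy' := hvT l₀ (by omega)
  exact hl₀ (hx'.symm.trans hy')

/-! ### Main auxiliary theorem -/

theorem main {X : Type*} [MetricSpace X] [CompleteSpace X] [SecondCountableTopology X]
    [MeasurableSpace X] [BorelSpace X] (C : Ctx X) :
    ∃ 𝓐 : Set (Set X), ¬ 𝓐.Countable ∧ (∀ s ∈ 𝓐, MeasurableSet s) ∧
      𝓐.PairwiseDisjoint id ∧
      ∀ s ∈ 𝓐, ¬ ∃ F : Set X, IsFsigma F ∧ s ⊆ F ∧ ∀ n, MeagerIn F (C.F n) := by
  have hinj : Function.Injective (fun x : ℕ → Bool => B C x) := by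
    intro x y h
    by_contra hxy
    obtain ⟨p, hp⟩ := B_nonempty C x
    have h' : B C x = B C y := h
    exact Set.disjoint_left.1 (B_disjoint C hxy) hp (h' ▸ hp)
  refine ⟨Set.range (fun x : ℕ → Bool => B C x), ?_, ?_, ?_, ?_⟩
  · intro hc
    haveI := hc.to_subtype
    have : Countable (ℕ → Bool) :=
      Function.Injective.countable
        (f := fun x : ℕ → Bool =>
          (⟨B C x, mem_range_self x⟩ : ↥(range fun x : ℕ → Bool => B C x)))
        (fun a b hab => hinj (congrArg Subtype.val hab))
    exact not_countable_funNatBool this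
  · rintro s ⟨x, rfl⟩
    exact ((KK_closed C x []).measurableSet).diff
      (MeasurableSet.iUnion fun u => (Gd_closed C u).measurableSet)
  · rintro s ⟨x, rfl⟩ t ⟨y, rfl⟩ hst
    exact B_disjoint C (fun h => hst (by rw [h]))
  · rintro s ⟨x, rfl⟩ ⟨F, ⟨sq, hsq, rfl⟩, hsubF, htr⟩
    apply B_not_covered C x sq hsq _ hsubF
    intro k n
    exact (htr n).mono (preimage_mono (subset_iUnion sq k))

end Stmt18Aux

theorem stmt18 {X : Type*} [TopologicalSpace X] [PolishSpace X]
    [MeasurableSpace X] [BorelSpace X]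
    (hX : Perfect (Set.univ : Set X)) (𝓕 : ℕ → Set X)
    (h𝓕 : ∀ n, PerfectSet (𝓕 n))
    (hdense : ∀ U : Set X, IsOpen U → U.Nonempty →
      ∃ n, 𝓕 n ⊆ U ∧ IsNowhereDense (𝓕 n)) :
    ∃ 𝓐 : Set (Set X), ¬ 𝓐.Countable ∧ (∀ s ∈ 𝓐, MeasurableSet s) ∧
      𝓐.PairwiseDisjoint id ∧
      ∀ s ∈ 𝓐, ¬ ∃ F : Set X, IsFsigma F ∧ s ⊆ F ∧ ∀ n, MeagerIn F (𝓕 n) := by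
  letI := TopologicalSpace.upgradeIsCompletelyMetrizable X
  exact Stmt18Aux.main ⟨𝓕, fun n => (h𝓕 n).1, fun n => (h𝓕 n).2, hdense⟩
end

section
/- Let {f_α : α < 𝔟} ⊆ ℕ^ℕ be ≤*-increasing and unbounded, let h : ℕ^ℕ → P be a homeomorphism onto the irrationals P of I = [0,1], let ℚ = I \ P, A = {h(f_α) : α < 𝔟} and B = A ∪ ℚ. If F is any F_σ-set in I with A ⊆ F, then F ∩ ℚ ≠ ∅. -/
open Set

/-- Eventual domination `f ≤* g`. -/
def EvLE (f g : ℕ → ℕ) : Prop := ∀ᶠ n in Filter.atTop, f n ≤ g n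

/-- The bounding number `𝔟`: the least cardinality of a `≤*`-unbounded family. -/
noncomputable def bNum : Cardinal :=
  sInf {c : Cardinal | ∃ S : Set (ℕ → ℕ), Cardinal.mk S = c ∧ ∀ g, ∃ f ∈ S, ¬ EvLE f g}

theorem stmt19 (ι : Type) [LinearOrder ι] [WellFoundedLT ι]
    (hι : Cardinal.mk ι = bNum)
    (f : ι → ℕ → ℕ)
    (hmono : ∀ α β : ι, α < β → EvLE (f α) (f β) ∧ ¬ EvLE (f β) (f α))
    (hunb : ∀ g : ℕ → ℕ, ∃ α, ¬ EvLE (f α) g)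
    (h : (ℕ → ℕ) ≃ₜ {x : Set.Icc (0 : ℝ) 1 // Irrational (x : ℝ)})
    (F : Set (Set.Icc (0 : ℝ) 1)) (hF : IsFsigma F)
    (hAF : {x : Set.Icc (0 : ℝ) 1 | ∃ α, x = ↑(h (f α))} ⊆ F) :
    ∃ q ∈ F, ¬ Irrational (q : ℝ) := by
  by_contra hcon
  push_neg at hcon
  obtain ⟨s, hscl, hsF⟩ := hF
  -- each point of F is irrational
  have hirr : ∀ x ∈ F, Irrational (x : ℝ) := hcon
  -- preimages in the subtype
  set P := {x : Set.Icc (0 : ℝ) 1 // Irrational (x : ℝ)}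
  have hemb : Topology.IsEmbedding ((↑) : P → Set.Icc (0 : ℝ) 1) :=
    Topology.IsEmbedding.subtypeVal
  -- each s n is compact
  have hscomp : ∀ n, IsCompact (s n) := fun n => (hscl n).isCompact
  -- K n : preimage in P
  set K : ℕ → Set P := fun n => ((↑) : P → Set.Icc (0 : ℝ) 1) ⁻¹' (s n) with hK
  have hKcomp : ∀ n, IsCompact (K n) := by
    intro n
    rw [hemb.isCompact_iff]
    have himg : ((↑) : P → Set.Icc (0 : ℝ) 1) '' (K n) = s n := by
      apply Set.image_preimage_eq_of_subset
      intro x hx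
      have hxF : x ∈ F := hsF ▸ Set.mem_iUnion.2 ⟨n, hx⟩
      exact ⟨⟨x, hirr x hxF⟩, rfl⟩
    rw [himg]; exact hscomp n
  -- C n : preimage in ℕ → ℕ
  set C : ℕ → Set (ℕ → ℕ) := fun n => h ⁻¹' (K n) with hC
  have hCcomp : ∀ n, IsCompact (C n) := fun n =>
    h.isCompact_preimage.2 (hKcomp n)
  -- pointwise bounds
  have hbdd : ∀ n m, ∃ b, ∀ g ∈ C n, g m ≤ b := by
    intro n m
    have : IsCompact ((fun g : ℕ → ℕ => g m) '' C n) :=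
      (hCcomp n).image (continuous_apply m)
    obtain ⟨b, hb⟩ := this.finite_of_discrete.bddAbove
    exact ⟨b, fun g hg => hb ⟨g, hg, rfl⟩⟩
  choose bd hbd using hbdd
  set g : ℕ → ℕ := fun m => Finset.sup (Finset.range (m + 1)) (fun n => bd n m) with hg
  obtain ⟨α, hα⟩ := hunb g
  apply hα
  -- f α ∈ C n for some n
  have hmem : (↑(h (f α)) : Set.Icc (0 : ℝ) 1) ∈ F := hAF ⟨α, rfl⟩
  rw [hsF] at hmem
  obtain ⟨n, hn⟩ := Set.mem_iUnion.1 hmem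
  have hfC : f α ∈ C n := by
    simp only [hC, Set.mem_preimage, hK] ; exact hn
  refine Filter.eventually_atTop.2 ⟨n, fun m hm => ?_⟩
  calc f α m ≤ bd n m := hbd n m (f α) hfC
    _ ≤ g m := by
      simp only [hg]
      exact Finset.le_sup (f := fun n => bd n m) (Finset.mem_range.2 (Nat.lt_succ_of_le hm))
end
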